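/- The wobbling group W(ℤ) (bijections of ℤ at bounded distance from the identity) is a subgroup of index 2 in the group BL(ℤ) of all bi-Lipschitz bijections of ℤ, with the reflection x ↦ -x representing the nontrivial coset. -/

import Mathlib

namespace WobAux

variable (f : Equiv.Perm ℤ) (K L : ℤ)

def Lip (f : Equiv.Perm ℤ) (K : ℤ) : Prop := ∀ x y : ℤ, |f x - f y| ≤ K * |x - y|

lemma one_le (hK : Lip f K) : 1 ≤ K := by
  have hne : f 0 ≠ f 1 := fun h => by simpa using f.injective h
  have h1 : (1:ℤ) ≤ |f 0 - f 1| := Int.one_le_abs (sub_ne_zero.mpr hne)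
  have h2 := hK 0 1
  simpa using h1.trans h2

lemma lip_symm (hL : Lip f.symm L) : ∀ x y : ℤ, |x - y| ≤ L * |f x - f y| := by
  intro x y
  simpa using hL (f x) (f y)


lemma ivt (hK : Lip f K) (hL : Lip f.symm L) {i j v : ℤ} (hij : i ≤ j)
    (h1 : f i ≤ v) (h2 : v ≤ f j) : f.symm v ≤ j + L * K := by
  have hK1 := one_le f K hK
  have hL1 := one_le f.symm L hL
  classical
  set S : Finset ℤ := (Finset.Icc i j).filter (fun t => f t ≤ v) with hS
  have hiS : i ∈ S := by simp [hS, hij, h1]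
  have hne : S.Nonempty := ⟨i, hiS⟩
  set k := S.max' hne with hk
  have hkS : k ∈ S := S.max'_mem hne
  have hkIcc : k ∈ Finset.Icc i j := Finset.mem_filter.mp hkS |>.1
  have hfk : f k ≤ v := (Finset.mem_filter.mp hkS).2
  have hkj : k ≤ j := (Finset.mem_Icc.mp hkIcc).2
  have hik : i ≤ k := (Finset.mem_Icc.mp hkIcc).1
  have hvk : v ≤ f k + K := by
    rcases eq_or_lt_of_le hkj with heq | hlt
    · rw [heq] at hfk ⊢; omega
    · have hk1 : k + 1 ∉ S := fun h => by have := S.le_max' _ h; omega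
      have : ¬ (f (k+1) ≤ v) := by
        intro h
        apply hk1
        rw [hS, Finset.mem_filter, Finset.mem_Icc]
        exact ⟨⟨by omega, by omega⟩, h⟩
      have hstep := hK (k+1) k
      simp only [add_sub_cancel_left] at hstep
      rw [abs_one, mul_one, abs_le] at hstep
      omega
  -- |f.symm v - k| ≤ L * (v - f k) ≤ L * K
  have h3 := hL v (f k)
  rw [Equiv.symm_apply_apply] at h3
  have h4 : |v - f k| ≤ K := by rw [abs_le]; omega
  have h5 : L * |v - f k| ≤ L * K := mul_le_mul_of_nonneg_left h4 (by omega)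
  have h6 : |f.symm v - k| ≤ L * K := h3.trans h5
  rw [abs_le] at h6
  omega


lemma signPos (hK : Lip f K) (n₀ : ℤ) (hbig : ∀ n, n₀ ≤ n → K < |f n|)
    (seed : K < f n₀) : ∀ n, n₀ ≤ n → K < f n := by
  have hK1 := one_le f K hK
  refine Int.le_induction seed ?_
  intro n hn ih
  · have hstep := hK (n+1) n
    simp only [add_sub_cancel_left] at hstep
    rw [abs_one, mul_one, abs_le] at hstep
    have hb := hbig (n+1) (by omega)
    rcases lt_abs.mp hb with h | h <;> omega

lemma signNeg (hK : Lip f K) (n₀ : ℤ) (hbig : ∀ n, n₀ ≤ n → K < |f n|)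
    (seed : f n₀ < -K) : ∀ n, n₀ ≤ n → f n < -K := by
  have key := signPos (f.trans (Equiv.neg ℤ)) K
    (by
      intro x y
      simp only [Equiv.trans_apply, Equiv.neg_apply]
      have h : -f x - -f y = -(f x - f y) := by ring
      rw [h, abs_neg]
      exact hK x y)
    n₀ (by
      intro n hn
      simp only [Equiv.trans_apply, Equiv.neg_apply, abs_neg]
      exact hbig n hn)
    (by
      have := seed
      simp only [Equiv.trans_apply, Equiv.neg_apply]
      omega)
  intro n hn
  have := key n hn
  simp only [Equiv.trans_apply, Equiv.neg_apply] at this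
  omega


lemma posboth (hK : Lip f K) (n₀ : ℤ) (hn₀ : 1 ≤ n₀)
    (hpos : ∀ n, n₀ ≤ n → K < f n) (hpos2 : ∀ n, n ≤ -n₀ → K < f n) : False := by
  have hK1 := one_le f K hK
  have hKn : 0 ≤ K * n₀ := by positivity
  have habs0 : 0 ≤ |f 0| := abs_nonneg (f 0)
  set v : ℤ := -(K * n₀ + |f 0| + 1) with hv
  set z := f.symm v with hz
  have hfz : f z = v := f.apply_symm_apply v
  rcases le_or_gt n₀ z with h | h
  · have := hpos z h; omega
  rcases le_or_gt z (-n₀) with h2 | h2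
  · have := hpos2 z h2; omega
  · have hzb : |z - 0| ≤ n₀ := by rw [sub_zero, abs_le]; omega
    have h3 := (hK z 0).trans (mul_le_mul_of_nonneg_left hzb (by omega))
    rw [abs_le] at h3
    have h4 : -|f 0| ≤ f 0 := neg_abs_le (f 0)
    omega

lemma upperHalf (hK : Lip f K) (hL : Lip f.symm L) (n₀ : ℤ) (hn₀ : 1 ≤ n₀)
    (hpos : ∀ n, n₀ ≤ n → K < f n) (hneg : ∀ n, n ≤ -n₀ → f n < -K) :
    ∀ x, n₀ ≤ x → f x ≤ x + (L * K + n₀) := by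
  have hK1 := one_le f K hK
  have hL1 := one_le f.symm L hL
  have hLK : (1:ℤ) * 1 ≤ L * K := mul_le_mul hL1 hK1 one_pos.le (by omega)
  intro x hx
  have hfx : K < f x := hpos x hx
  have hp : f (f.symm 0) = 0 := f.apply_symm_apply 0
  have hpn : f.symm 0 < n₀ := by
    by_contra h
    have := hpos (f.symm 0) (by omega)
    omega
  have hcard := Finset.card_le_card_of_injOn (fun v => f.symm v)
    (s := Finset.Icc 1 (f x)) (t := Finset.Icc (1 - n₀) (x + L * K))
    (by
      intro v hv
      dsimp only
      rw [Finset.mem_coe, Finset.mem_Icc] at hv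
      rw [Finset.mem_coe, Finset.mem_Icc]
      constructor
      · by_contra h
        have h2 := hneg (f.symm v) (by omega)
        rw [f.apply_symm_apply] at h2
        omega
      · exact ivt f K L hK hL (by omega) (by omega : f (f.symm 0) ≤ v) hv.2)
    (fun a _ b _ h => f.symm.injective h)
  rw [Int.card_Icc, Int.card_Icc] at hcard
  omega

lemma rightBound (hK : Lip f K) (hL : Lip f.symm L) (n₀ : ℤ) (hn₀ : 1 ≤ n₀)
    (hpos : ∀ n, n₀ ≤ n → K < f n) (hneg : ∀ n, n ≤ -n₀ → f n < -K) :
    ∃ M : ℤ, ∀ x, n₀ ≤ x → |f x - x| ≤ M := by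
  have hK1 := one_le f K hK
  have hL1 := one_le f.symm L hL
  have habs0 : 0 ≤ |f 0| := abs_nonneg (f 0)
  have habs0' : 0 ≤ |f.symm 0| := abs_nonneg (f.symm 0)
  have hup := upperHalf f K L hK hL n₀ hn₀ hpos hneg
  set n₀' : ℤ := K * (n₀ + L) + |f 0| + 1 with hn₀'def
  have hKnL : 0 ≤ K * (n₀ + L) := by
    have : (0:ℤ) ≤ n₀ + L := by omega
    exact mul_nonneg (by omega) this
  have hn₀'1 : 1 ≤ n₀' := by omega
  have hbig : ∀ v : ℤ, n₀' ≤ |v| → n₀ + L < |f.symm v| := by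
    intro v hv
    have h1 := hK (f.symm v) 0
    rw [f.apply_symm_apply, sub_zero] at h1
    have h2 : |v| - |f 0| ≤ |v - f 0| := by
      have := abs_sub_abs_le_abs_sub v (f 0)
      omega
    have h3 : K * (n₀ + L) < K * |f.symm v| := by omega
    exact lt_of_mul_lt_mul_left h3 (by omega)
  have hpos' : ∀ v, n₀' ≤ v → L < f.symm v := by
    intro v hv
    have h1 := hbig v (by rw [abs_of_nonneg (by omega : (0:ℤ) ≤ v)]; omega)
    rcases lt_abs.mp h1 with h | h
    · omega
    · exfalso
      have h2 := hneg (f.symm v) (by omega)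
      rw [f.apply_symm_apply] at h2
      omega
  have hneg' : ∀ v, v ≤ -n₀' → f.symm v < -L := by
    intro v hv
    have h1 := hbig v (by rw [abs_of_nonpos (by omega : v ≤ (0:ℤ))]; omega)
    rcases lt_abs.mp h1 with h | h
    · exfalso
      have h2 := hpos (f.symm v) (by omega)
      rw [f.apply_symm_apply] at h2
      omega
    · omega
  have hup' := upperHalf f.symm L K hL (by rw [Equiv.symm_symm]; exact hK) n₀' hn₀'1 hpos' hneg'
  refine ⟨max (L * K + n₀) (max (K * L + n₀') (L * n₀' + |f.symm 0|)), ?_⟩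
  intro x hx
  have hfx : K < f x := hpos x hx
  have hu : f x ≤ x + (L * K + n₀) := hup x hx
  have hlow : x - f x ≤ max (K * L + n₀') (L * n₀' + |f.symm 0|) := by
    rcases le_or_gt n₀' (f x) with h | h
    · have h2 := hup' (f x) h
      rw [f.symm_apply_apply] at h2
      have := le_max_left (K * L + n₀') (L * n₀' + |f.symm 0|)
      omega
    · have h2 := hL (f x) 0
      rw [f.symm_apply_apply, sub_zero] at h2
      have h3 : |f x| ≤ n₀' := by rw [abs_of_nonneg (by omega : (0:ℤ) ≤ f x)]; omega
      have h4 : L * |f x| ≤ L * n₀' := mul_le_mul_of_nonneg_left h3 (by omega)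
      have h5 : x - f.symm 0 ≤ |x - f.symm 0| := le_abs_self _
      have h6 : f.symm 0 ≤ |f.symm 0| := le_abs_self _
      have := le_max_right (K * L + n₀') (L * n₀' + |f.symm 0|)
      omega
  rw [abs_le]
  constructor
  · have := le_max_right (L * K + n₀) (max (K * L + n₀') (L * n₀' + |f.symm 0|))
    omega
  · have := le_max_left (L * K + n₀) (max (K * L + n₀') (L * n₀' + |f.symm 0|))
    omega

lemma boundAll (hK : Lip f K) (hL : Lip f.symm L) (n₀ : ℤ) (hn₀ : 1 ≤ n₀)
    (hpos : ∀ n, n₀ ≤ n → K < f n) (hneg : ∀ n, n ≤ -n₀ → f n < -K) :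
    ∃ M : ℤ, ∀ x, |f x - x| ≤ M := by
  have hK1 := one_le f K hK
  obtain ⟨M₁, hM₁⟩ := rightBound f K L hK hL n₀ hn₀ hpos hneg
  -- conj x = -f(-x)
  set conj : Equiv.Perm ℤ := (Equiv.neg ℤ).trans (f.trans (Equiv.neg ℤ)) with hconj
  have hconjApp : ∀ x, conj x = -f (-x) := by intro x; simp [hconj]
  have hconjSymm : ∀ u, conj.symm u = -f.symm (-u) := by intro u; simp [hconj]
  have lipc : Lip conj K := by
    intro x y
    rw [hconjApp, hconjApp,
      show -f (-x) - -f (-y) = -(f (-x) - f (-y)) from by ring, abs_neg]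
    calc |f (-x) - f (-y)| ≤ K * |(-x) - (-y)| := hK _ _
      _ = K * |x - y| := by rw [neg_sub_neg, abs_sub_comm]
  have lipcs : Lip conj.symm L := by
    intro u v
    rw [hconjSymm, hconjSymm,
      show -f.symm (-u) - -f.symm (-v) = -(f.symm (-u) - f.symm (-v)) from by ring, abs_neg]
    calc |f.symm (-u) - f.symm (-v)| ≤ L * |(-u) - (-v)| := hL _ _
      _ = L * |u - v| := by rw [neg_sub_neg, abs_sub_comm]
  obtain ⟨M₂, hM₂⟩ := rightBound conj K L lipc lipcs n₀ hn₀
    (by intro n hn; rw [hconjApp]; have := hneg (-n) (by omega); omega)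
    (by intro n hn; rw [hconjApp]; have := hpos (-n) (by omega); omega)
  refine ⟨max M₁ (max M₂ (K * n₀ + |f 0| + n₀)), ?_⟩
  intro x
  rcases le_or_gt n₀ x with h | h
  · have := hM₁ x h
    have h2 := le_max_left M₁ (max M₂ (K * n₀ + |f 0| + n₀))
    omega
  rcases le_or_gt x (-n₀) with h2 | h2
  · have h3 := hM₂ (-x) (by omega)
    rw [hconjApp, neg_neg] at h3
    rw [show -f x - -x = -(f x - x) from by ring, abs_neg] at h3
    have h4 := (le_max_left M₂ (K * n₀ + |f 0| + n₀)).trans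
      (le_max_right M₁ (max M₂ (K * n₀ + |f 0| + n₀)))
    omega
  · have h3 := hK x 0
    rw [sub_zero] at h3
    have h4 : |x| ≤ n₀ := by rw [abs_le]; omega
    have h5 : K * |x| ≤ K * n₀ := mul_le_mul_of_nonneg_left h4 (by omega)
    have h6 := (le_max_right M₂ (K * n₀ + |f 0| + n₀)).trans
      (le_max_right M₁ (max M₂ (K * n₀ + |f 0| + n₀)))
    rw [abs_le] at h3 ⊢
    rw [abs_le] at h4
    have h7 : -|f 0| ≤ f 0 ∧ f 0 ≤ |f 0| := ⟨neg_abs_le _, le_abs_self _⟩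
    omega

lemma dichotomy (hK : Lip f K) (hL : Lip f.symm L) :
    (∃ M : ℤ, ∀ x, |f x - x| ≤ M) ∨ (∃ M : ℤ, ∀ x, |f x + x| ≤ M) := by
  have hK1 := one_le f K hK
  have hL1 := one_le f.symm L hL
  have hLK : (1:ℤ) * 1 ≤ L * K := mul_le_mul hL1 hK1 one_pos.le (by omega)
  have habs0' : 0 ≤ |f.symm 0| := abs_nonneg (f.symm 0)
  set n₀ : ℤ := L * K + |f.symm 0| + 1 with hn₀def
  have hn₀ : 1 ≤ n₀ := by omega
  have hbig : ∀ n : ℤ, n₀ ≤ |n| → K < |f n| := by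
    intro n hn
    have h1 := hL (f n) 0
    rw [f.symm_apply_apply, sub_zero] at h1
    have h2 : |n| - |f.symm 0| ≤ |n - f.symm 0| := by
      have := abs_sub_abs_le_abs_sub n (f.symm 0)
      omega
    have h3 : L * K < L * |f n| := by omega
    exact lt_of_mul_lt_mul_left h3 (by omega)
  -- reflected perm g x = f (-x)
  set g : Equiv.Perm ℤ := (Equiv.neg ℤ).trans f with hg
  have hgApp : ∀ x, g x = f (-x) := by intro x; simp [hg]
  have lipg : Lip g K := by
    intro x y
    rw [hgApp, hgApp]
    calc |f (-x) - f (-y)| ≤ K * |(-x) - (-y)| := hK _ _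
      _ = K * |x - y| := by rw [neg_sub_neg, abs_sub_comm]
  have hbigg : ∀ n : ℤ, n₀ ≤ n → K < |g n| := by
    intro n hn
    rw [hgApp]
    exact hbig (-n) (by rw [abs_neg, abs_of_nonneg (by omega : (0:ℤ) ≤ n)]; omega)
  have hbigr : ∀ n : ℤ, n₀ ≤ n → K < |f n| := fun n hn =>
    hbig n (by rw [abs_of_nonneg (by omega : (0:ℤ) ≤ n)]; omega)
  -- seeds
  have hseedR := hbigr n₀ le_rfl
  have hseedL := hbigg n₀ le_rfl
  -- left-side sign facts transported back to f
  have hLpos : K < g n₀ → ∀ n, n ≤ -n₀ → K < f n := by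
    intro hs n hn
    have := signPos g K lipg n₀ hbigg hs (-n) (by omega)
    rw [hgApp, neg_neg] at this
    exact this
  have hLneg : g n₀ < -K → ∀ n, n ≤ -n₀ → f n < -K := by
    intro hs n hn
    have := signNeg g K lipg n₀ hbigg hs (-n) (by omega)
    rw [hgApp, neg_neg] at this
    exact this
  rcases lt_abs.mp hseedR with hR | hR <;> rcases lt_abs.mp hseedL with hLe | hLe
  · -- both positive : contradiction
    exact absurd (posboth f K hK n₀ hn₀ (signPos f K hK n₀ hbigr hR) (hLpos hLe)) not_false
  · -- right positive, left negative : f x - x bounded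
    left
    exact boundAll f K L hK hL n₀ hn₀ (signPos f K hK n₀ hbigr hR) (hLneg (by omega))
  · -- right negative, left positive : f x + x bounded
    right
    -- apply boundAll to negf x = -f x
    set negf : Equiv.Perm ℤ := f.trans (Equiv.neg ℤ) with hnegf
    have hnegfApp : ∀ x, negf x = -f x := by intro x; simp [hnegf]
    have hnegfSymm : ∀ u, negf.symm u = f.symm (-u) := by intro u; simp [hnegf]
    have lipn : Lip negf K := by
      intro x y
      rw [hnegfApp, hnegfApp, show -f x - -f y = -(f x - f y) from by ring, abs_neg]
      exact hK x y
    have lipns : Lip negf.symm L := by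
      intro u v
      rw [hnegfSymm, hnegfSymm]
      calc |f.symm (-u) - f.symm (-v)| ≤ L * |(-u) - (-v)| := hL _ _
        _ = L * |u - v| := by rw [neg_sub_neg, abs_sub_comm]
    have hfnR := signNeg f K hK n₀ hbigr (by omega)
    have hfnL := hLpos hLe
    obtain ⟨M, hM⟩ := boundAll negf K L lipn lipns n₀ hn₀
      (by intro n hn; rw [hnegfApp]; have := hfnR n hn; omega)
      (by intro n hn; rw [hnegfApp]; have := hfnL n hn; omega)
    refine ⟨M, fun x => ?_⟩
    have := hM x
    rw [hnegfApp, show -f x - x = -(f x + x) from by ring, abs_neg] at this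
    exact this
  · -- both negative : contradiction
    exfalso
    set negf : Equiv.Perm ℤ := f.trans (Equiv.neg ℤ) with hnegf
    have hnegfApp : ∀ x, negf x = -f x := by intro x; simp [hnegf]
    have lipn : Lip negf K := by
      intro x y
      rw [hnegfApp, hnegfApp, show -f x - -f y = -(f x - f y) from by ring, abs_neg]
      exact hK x y
    have hfnR := signNeg f K hK n₀ hbigr (by omega)
    have hfnL := hLneg (by omega)
    exact posboth negf K lipn n₀ hn₀
      (by intro n hn; rw [hnegfApp]; have := hfnR n hn; omega)
      (by intro n hn; rw [hnegfApp]; have := hfnL n hn; omega)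

lemma w_symm (M : ℤ) (hM : ∀ x, |f x - x| ≤ M) : ∀ x, |f.symm x - x| ≤ M := by
  intro x
  have h := hM (f.symm x)
  rw [f.apply_symm_apply] at h
  rw [abs_sub_comm]
  exact h

lemma w_lip (M : ℤ) (hM : ∀ x, |f x - x| ≤ M) :
    ∀ x y, |f x - f y| ≤ (2 * M + 1) * |x - y| := by
  have hM0 : 0 ≤ M := le_trans (abs_nonneg _) (hM 0)
  intro x y
  rcases eq_or_ne x y with rfl | hne
  · simp
  · have h1 : (1:ℤ) ≤ |x - y| := Int.one_le_abs (sub_ne_zero.mpr hne)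
    have h2 := hM x
    have h3 := hM y
    have h4 : (2 * M) * 1 ≤ (2 * M) * |x - y| := mul_le_mul_of_nonneg_left h1 (by omega)
    have h5 : |f x - f y| ≤ |f x - x| + |x - y| + |y - f y| := by
      have t1 := abs_sub_le (f x) x (f y)
      have t2 := abs_sub_le x y (f y)
      have t3 : |y - f y| = |f y - y| := abs_sub_comm _ _
      omega
    have t4 : |f y - y| = |y - f y| := abs_sub_comm _ _
    have hring : (2 * M + 1) * |x - y| = (2 * M) * |x - y| + |x - y| := by ring
    omega

end WobAux

open WobAux in
/-- The wobbling group W(ℤ) is an index-2 subgroup of the group BL(ℤ) of bi-Lipschitz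
bijections of ℤ, the reflection x ↦ -x representing the nontrivial coset. -/
theorem wobbling_index_two :
    ∃ (BL W : Subgroup (Equiv.Perm ℤ)),
      (∀ f : Equiv.Perm ℤ, f ∈ BL ↔
        ∃ K L : ℤ, (∀ x y : ℤ, |f x - f y| ≤ K * |x - y|) ∧
          (∀ u v : ℤ, |f.symm u - f.symm v| ≤ L * |u - v|)) ∧
      (∀ f : Equiv.Perm ℤ, f ∈ W ↔ ∃ M : ℤ, ∀ x : ℤ, |f x - x| ≤ M) ∧
      W ≤ BL ∧
      (W.subgroupOf BL).index = 2 ∧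
      (Equiv.neg ℤ ∈ BL ∧ Equiv.neg ℤ ∉ W) ∧
      (∀ f ∈ BL, f ∈ W ∨ Equiv.neg ℤ * f ∈ W) := by
  set BL : Subgroup (Equiv.Perm ℤ) :=
    { carrier := {f : Equiv.Perm ℤ | ∃ K L : ℤ, (∀ x y : ℤ, |f x - f y| ≤ K * |x - y|) ∧
        (∀ u v : ℤ, |f.symm u - f.symm v| ≤ L * |u - v|)}
      one_mem' := ⟨1, 1, by intro x y; simp, by intro u v; show |u - v| ≤ 1 * |u - v|; simp⟩
      mul_mem' := by
        rintro a b ⟨Ka, La, hKa, hLa⟩ ⟨Kb, Lb, hKb, hLb⟩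
        have ha0 : (1:ℤ) ≤ Ka := one_le a Ka hKa
        have hb0 : (1:ℤ) ≤ Lb := one_le b.symm Lb hLb
        refine ⟨Ka * Kb, Lb * La, ?_, ?_⟩
        · intro x y
          have h1 : (a * b) x = a (b x) := rfl
          have h2 : (a * b) y = a (b y) := rfl
          rw [h1, h2]
          calc |a (b x) - a (b y)| ≤ Ka * |b x - b y| := hKa _ _
            _ ≤ Ka * (Kb * |x - y|) := mul_le_mul_of_nonneg_left (hKb x y) (by omega)
            _ = Ka * Kb * |x - y| := by ring
        · intro u v
          have h1 : (a * b).symm u = b.symm (a.symm u) := by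
            simp [Equiv.Perm.mul_def]
          have h2 : (a * b).symm v = b.symm (a.symm v) := by
            simp [Equiv.Perm.mul_def]
          rw [h1, h2]
          calc |b.symm (a.symm u) - b.symm (a.symm v)| ≤ Lb * |a.symm u - a.symm v| := hLb _ _
            _ ≤ Lb * (La * |u - v|) := mul_le_mul_of_nonneg_left (hLa u v) (by omega)
            _ = Lb * La * |u - v| := by ring
      inv_mem' := by
        rintro a ⟨Ka, La, hKa, hLa⟩
        refine ⟨La, Ka, ?_, ?_⟩
        · intro x y
          have h1 : a⁻¹ x = a.symm x := rfl
          have h2 : a⁻¹ y = a.symm y := rfl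
          rw [h1, h2]; exact hLa x y
        · intro u v
          have h1 : (a⁻¹).symm u = a u := rfl
          have h2 : (a⁻¹).symm v = a v := rfl
          rw [h1, h2]; exact hKa u v } with hBLdef
  set W : Subgroup (Equiv.Perm ℤ) :=
    { carrier := {f : Equiv.Perm ℤ | ∃ M : ℤ, ∀ x : ℤ, |f x - x| ≤ M}
      one_mem' := ⟨0, by intro x; simp⟩
      mul_mem' := by
        rintro a b ⟨Ma, hMa⟩ ⟨Mb, hMb⟩
        refine ⟨Ma + Mb, fun x => ?_⟩
        have h1 : (a * b) x = a (b x) := rfl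
        rw [h1]
        have t1 := abs_sub_le (a (b x)) (b x) x
        have t2 := hMa (b x)
        have t3 := hMb x
        omega
      inv_mem' := by
        rintro a ⟨Ma, hMa⟩
        refine ⟨Ma, fun x => ?_⟩
        have h1 : a⁻¹ x = a.symm x := rfl
        rw [h1]
        exact w_symm a Ma hMa x } with hWdef
  have hmemBL : ∀ f : Equiv.Perm ℤ, f ∈ BL ↔
      ∃ K L : ℤ, (∀ x y : ℤ, |f x - f y| ≤ K * |x - y|) ∧
        (∀ u v : ℤ, |f.symm u - f.symm v| ≤ L * |u - v|) := fun f => Iff.rfl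
  have hmemW : ∀ f : Equiv.Perm ℤ, f ∈ W ↔ ∃ M : ℤ, ∀ x : ℤ, |f x - x| ≤ M := fun f => Iff.rfl
  have hWBL : W ≤ BL := by
    rintro f ⟨M, hM⟩
    exact ⟨2 * M + 1, 2 * M + 1, w_lip f M hM, w_lip f.symm M (w_symm f M hM)⟩
  have hnegBL : Equiv.neg ℤ ∈ BL := by
    refine ⟨1, 1, ?_, ?_⟩
    · intro x y
      have e : (Equiv.neg ℤ) x - (Equiv.neg ℤ) y = -(x - y) := by
        simp only [Equiv.neg_apply]; ring
      rw [e, abs_neg, one_mul]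
    · intro u v
      have e : (Equiv.neg ℤ).symm u - (Equiv.neg ℤ).symm v = -(u - v) := by
        have h1 : (Equiv.neg ℤ).symm u = -u := by simp
        have h2 : (Equiv.neg ℤ).symm v = -v := by simp
        rw [h1, h2]; ring
      rw [e, abs_neg, one_mul]
  have hnegW : Equiv.neg ℤ ∉ W := by
    rintro ⟨M, hM⟩
    have h0 := hM 0
    have h1 := hM (M + 1)
    simp only [Equiv.neg_apply] at h0 h1
    rw [show -(M+1) - (M+1) = -(2*M+2) from by ring, abs_neg] at h1
    rw [abs_of_nonneg (by norm_num)] at h0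
    rw [abs_of_nonneg (by omega)] at h1
    omega
  have hdich : ∀ f ∈ BL, f ∈ W ∨ Equiv.neg ℤ * f ∈ W := by
    rintro f ⟨K, L, hK, hL⟩
    rcases dichotomy f K L hK hL with h | ⟨M, hM⟩
    · exact Or.inl h
    · refine Or.inr ⟨M, fun x => ?_⟩
      have h1 : (Equiv.neg ℤ * f) x = -(f x) := rfl
      rw [h1, show -f x - x = -(f x + x) from by ring, abs_neg]
      exact hM x
  have hexcl : ∀ f : Equiv.Perm ℤ, f ∈ W → Equiv.neg ℤ * f ∈ W → False := by
    rintro f ⟨M₁, hM₁⟩ ⟨M₂, hM₂⟩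
    have h1 := hM₁ (M₁ + M₂ + 1)
    have h2 := hM₂ (M₁ + M₂ + 1)
    have h0 := hM₁ 0
    have h00 := hM₂ 0
    have e : (Equiv.neg ℤ * f) (M₁ + M₂ + 1) = -(f (M₁ + M₂ + 1)) := rfl
    rw [e] at h2
    rw [abs_le] at h1 h2
    rw [abs_le] at h0 h00
    omega
  have hswap : ∀ f : Equiv.Perm ℤ, (f * Equiv.neg ℤ ∈ W ↔ Equiv.neg ℤ * f ∈ W) := by
    intro f
    constructor
    · rintro ⟨M, hM⟩
      refine ⟨M, fun x => ?_⟩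
      have h1 := hM (-x)
      have e : (f * Equiv.neg ℤ) (-x) = f x := by
        have : (f * Equiv.neg ℤ) (-x) = f (-(-x)) := rfl
        rw [this, neg_neg]
      rw [e] at h1
      have e2 : (Equiv.neg ℤ * f) x = -(f x) := rfl
      rw [e2, show -f x - x = -(f x - -x) from by ring, abs_neg]
      exact h1
    · rintro ⟨M, hM⟩
      refine ⟨M, fun x => ?_⟩
      have h1 := hM (-x)
      have e : (Equiv.neg ℤ * f) (-x) = -(f (-x)) := rfl
      rw [e] at h1
      have e2 : (f * Equiv.neg ℤ) x = f (-x) := rfl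
      rw [e2]
      rw [show -f (-x) - -x = -(f (-x) - x) from by ring, abs_neg] at h1
      exact h1
  refine ⟨BL, W, hmemBL, hmemW, hWBL, ?_, ⟨hnegBL, hnegW⟩, hdich⟩
  rw [Subgroup.index_eq_two_iff]
  refine ⟨⟨Equiv.neg ℤ, hnegBL⟩, fun b => ?_⟩
  rw [Xor]
  simp only [Subgroup.mem_subgroupOf]
  have hbv : ((b * ⟨Equiv.neg ℤ, hnegBL⟩ : BL) : Equiv.Perm ℤ) = (b : Equiv.Perm ℤ) * Equiv.neg ℤ := rfl
  rw [hbv]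
  rcases hdich (b : Equiv.Perm ℤ) b.2 with h | h
  · exact Or.inr ⟨h, fun hc => hexcl _ h ((hswap _).mp hc)⟩
  · exact Or.inl ⟨(hswap _).mpr h, fun hc => hexcl _ hc h⟩
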